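/- A finite simple graph G on at least two vertices has at least k pairwise edge-disjoint paths between every two distinct vertices if and only if G is k-edge-connected. -/

import Mathlib

open Finset List

namespace EdgeMenger

variable {V : Type*} [DecidableEq V] {G : SimpleGraph V}

/-- net out-flow of a dart set at a vertex. -/
def net (D : Finset (V × V)) (x : V) : ℤ :=
  ((D.filter fun p => p.1 = x).card : ℤ) - ((D.filter fun p => p.2 = x).card : ℤ)

lemma net_insert {D : Finset (V × V)} {p : V × V} (hp : p ∉ D) (x : V) :
    net (insert p D) x
      = net D x + (if p.1 = x then 1 else 0) - (if p.2 = x then 1 else 0) := by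
  unfold net
  rw [Finset.filter_insert, Finset.filter_insert]
  have h1 : p ∉ D.filter fun q => q.1 = x := fun h => hp (Finset.mem_of_mem_filter _ h)
  have h2 : p ∉ D.filter fun q => q.2 = x := fun h => hp (Finset.mem_of_mem_filter _ h)
  split_ifs <;> simp [Finset.card_insert_of_notMem, h1, h2] <;> ring

lemma net_erase {D : Finset (V × V)} {p : V × V} (hp : p ∈ D) (x : V) :
    net (D.erase p) x
      = net D x - (if p.1 = x then 1 else 0) + (if p.2 = x then 1 else 0) := by
  have hp' : p ∉ D.erase p := Finset.notMem_erase _ _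
  have := net_insert hp' x
  rw [Finset.insert_erase hp] at this
  omega

lemma net_empty (x : V) : net (∅ : Finset (V × V)) x = 0 := by simp [net]


lemma walk_count (x : V) : ∀ {a b : V} (W : G.Walk a b),
    (((W.darts.map SimpleGraph.Dart.toProd).filter fun p => p.1 = x).length : ℤ)
      - ((W.darts.map SimpleGraph.Dart.toProd).filter fun p => p.2 = x).length
    = (if a = x then 1 else 0) - (if b = x then 1 else 0) := by
  intro a b W
  induction W with
  | nil => by_cases h : a = x <;> simp [h]
  | @cons a c b h W ih =>
    simp only [SimpleGraph.Walk.darts_cons, List.map_cons, List.filter_cons]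
    by_cases h1 : a = x <;> by_cases h2 : c = x <;>
      simp only [h1, h2, if_pos, if_neg, decide_eq_true_eq, List.length_cons] <;>
      simp_all <;> omega

/-- Relating list filter length to Finset filter card for nodup lists. -/
lemma nodup_filter_card {l : List (V × V)} (h : l.Nodup) (Q : V × V → Prop)
    [DecidablePred Q] :
    (l.toFinset.filter Q).card = (l.filter fun p => Q p).length := by
  rw [show (Finset.filter Q l.toFinset) = Finset.filter (fun x => decide (Q x) = true) l.toFinset
      by apply Finset.filter_congr; intro x _; simp, ← List.toFinset_filter]
  exact List.toFinset_card_of_nodup (h.filter _)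


lemma exists_trail : ∀ (n : ℕ) (D : Finset (V × V)), D.card ≤ n →
    (∀ p ∈ D, G.Adj p.1 p.2) →
    ∀ u v : V, u ≠ v →
    (∀ x, x ≠ v → (D.filter fun p => p.2 = x).card ≤ (D.filter fun p => p.1 = x).card) →
    ((D.filter fun p => p.2 = u).card < (D.filter fun p => p.1 = u).card) →
    ∃ W : G.Walk u v, (W.darts.map SimpleGraph.Dart.toProd).Nodup ∧
      ∀ p ∈ W.darts.map SimpleGraph.Dart.toProd, p ∈ D := by
  intro n
  induction n with
  | zero =>
    intro D hcard _ u v _ _ hlt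
    have : D = ∅ := Finset.card_eq_zero.mp (Nat.le_zero.mp hcard)
    subst this; simp at hlt
  | succ n ih =>
    intro D hcard hadj u v huv hle hlt
    have hne : (D.filter fun p => p.1 = u).Nonempty := by
      rw [← Finset.card_pos]; omega
    obtain ⟨p, hpmem⟩ := hne
    obtain ⟨hpD, hp1⟩ := Finset.mem_filter.mp hpmem
    obtain ⟨a, b⟩ := p
    simp only at hp1
    subst hp1
    -- now the first component is literally `u` (or everything renamed); use names as-is
    have hab : G.Adj a b := by
      have := hadj _ hpD; exact this
    have hanb : a ≠ b := G.ne_of_adj hab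
    by_cases hbv : b = v
    · subst hbv
      refine ⟨SimpleGraph.Walk.cons hab SimpleGraph.Walk.nil, ?_, ?_⟩ <;> simp [hpD]
    · set D' := D.erase (a, b) with hD'
      have hsub : D' ⊆ D := Finset.erase_subset _ _
      have hcard' : D'.card ≤ n := by
        have h := Finset.card_erase_of_mem hpD
        rw [← hD'] at h
        have : 0 < D.card := Finset.card_pos.mpr ⟨_, hpD⟩
        omega
      have hkey1 : ∀ x, ((D'.filter fun p => p.1 = x).card : ℤ)
          = (D.filter fun p => p.1 = x).card - (if a = x then 1 else 0) := by
        intro x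
        rw [hD', Finset.filter_erase]
        by_cases hx : a = x
        · subst hx
          rw [Finset.card_erase_of_mem (by simp [hpD])]
          have : 0 < (D.filter fun p => p.1 = a).card := by
            apply Finset.card_pos.mpr ⟨(a, b), by simp [hpD]⟩
          simp; omega
        · rw [Finset.erase_eq_of_notMem (by simp [hx])]
          simp [hx]
      have hkey2 : ∀ x, ((D'.filter fun p => p.2 = x).card : ℤ)
          = (D.filter fun p => p.2 = x).card - (if b = x then 1 else 0) := by
        intro x
        rw [hD', Finset.filter_erase]
        by_cases hx : b = x
        · subst hx
          rw [Finset.card_erase_of_mem (by simp [hpD])]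
          have : 0 < (D.filter fun p => p.2 = b).card := by
            apply Finset.card_pos.mpr ⟨(a, b), by simp [hpD]⟩
          simp; omega
        · rw [Finset.erase_eq_of_notMem (by simp [hx])]
          simp [hx]
      have hle' : ∀ x, x ≠ v →
          (D'.filter fun p => p.2 = x).card ≤ (D'.filter fun p => p.1 = x).card := by
        intro x hx
        have h1 := hkey1 x; have h2 := hkey2 x
        have h3 := hle x hx
        by_cases hxa : a = x
        · subst hxa
          rw [if_pos rfl] at h1
          rw [if_neg (Ne.symm hanb)] at h2
          omega
        · rw [if_neg hxa] at h1
          by_cases hxb : b = x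
          · rw [if_pos hxb] at h2; omega
          · rw [if_neg hxb] at h2; omega
      have hlt' : (D'.filter fun p => p.2 = b).card < (D'.filter fun p => p.1 = b).card := by
        have h1 := hkey1 b; have h2 := hkey2 b
        rw [if_neg hanb] at h1
        rw [if_pos rfl] at h2
        have h3 := hle b hbv
        have h4 : 0 < (D.filter fun p => p.2 = b).card := by
          apply Finset.card_pos.mpr ⟨(a, b), by simp [hpD]⟩
        omega
      have hadj' : ∀ p ∈ D', G.Adj p.1 p.2 := fun p hp => hadj p (hsub hp)
      obtain ⟨W', hnd, hmem⟩ := ih D' hcard' hadj' b v hbv hle' hlt'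
      refine ⟨SimpleGraph.Walk.cons hab W', ?_, ?_⟩
      · simp only [SimpleGraph.Walk.darts_cons, List.map_cons, List.nodup_cons]
        refine ⟨fun hc => ?_, hnd⟩
        exact Finset.notMem_erase (a, b) D (hD' ▸ hmem _ hc)
      · intro q hq
        simp only [SimpleGraph.Walk.darts_cons, List.map_cons, List.mem_cons] at hq
        rcases hq with rfl | hq
        · exact hpD
        · exact hsub (hmem _ hq)

lemma decompose : ∀ (n k : ℕ) (D : Finset (V × V)), D.card ≤ n →
    (∀ p ∈ D, G.Adj p.1 p.2) →
    ∀ u v : V, u ≠ v →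
    (∀ x, x ≠ u → x ≠ v → net D x = 0) →
    net D u = k →
    ∃ P : Fin k → G.Walk u v,
      (∀ i, ∀ p ∈ ((P i).darts.map SimpleGraph.Dart.toProd), p ∈ D) ∧
      (∀ i j, i ≠ j → ∀ p ∈ ((P i).darts.map SimpleGraph.Dart.toProd),
        p ∉ ((P j).darts.map SimpleGraph.Dart.toProd)) := by
  intro n
  induction n with
  | zero =>
    intro k D hcard hadj u v huv hcons hnet
    have hD : D = ∅ := Finset.card_eq_zero.mp (Nat.le_zero.mp hcard)
    subst hD
    have hk : k = 0 := by simp [net] at hnet; omega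
    subst hk
    exact ⟨fun i => i.elim0, fun i => i.elim0, fun i => i.elim0⟩
  | succ n ih =>
    intro k D hcard hadj u v huv hcons hnet
    cases k with
    | zero => exact ⟨fun i => i.elim0, fun i => i.elim0, fun i => i.elim0⟩
    | succ k =>
      have hlt : (D.filter fun p => p.2 = u).card < (D.filter fun p => p.1 = u).card := by
        unfold net at hnet; omega
      have hle : ∀ x, x ≠ v →
          (D.filter fun p => p.2 = x).card ≤ (D.filter fun p => p.1 = x).card := by
        intro x hx
        by_cases hxu : x = u
        · subst hxu; omega
        · have := hcons x hxu hx; unfold net at this; omega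
      obtain ⟨W₀, hnd₀, hmem₀⟩ := exists_trail (G := G) (n + 1) D hcard hadj u v huv hle hlt
      set l₀ := W₀.darts.map SimpleGraph.Dart.toProd with hl₀
      set S₀ := l₀.toFinset with hS₀
      have hS₀D : S₀ ⊆ D := fun p hp => hmem₀ p (List.mem_toFinset.mp hp)
      set D' := D \ S₀ with hD'
      have hD'sub : D' ⊆ D := Finset.sdiff_subset
      have netD' : ∀ x, net D' x = net D x - net S₀ x := by
        intro x
        unfold net
        have h1 : (D'.filter fun p => p.1 = x)
            = (D.filter fun p => p.1 = x) \ (S₀.filter fun p => p.1 = x) := by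
          ext p; simp only [Finset.mem_filter, Finset.mem_sdiff, hD']; tauto
        have h2 : (D'.filter fun p => p.2 = x)
            = (D.filter fun p => p.2 = x) \ (S₀.filter fun p => p.2 = x) := by
          ext p; simp only [Finset.mem_filter, Finset.mem_sdiff, hD']; tauto
        rw [h1, h2, Finset.card_sdiff_of_subset (Finset.filter_subset_filter _ hS₀D),
          Finset.card_sdiff_of_subset (Finset.filter_subset_filter _ hS₀D)]
        have c1 : (S₀.filter fun p => p.1 = x).card ≤ (D.filter fun p => p.1 = x).card :=
          Finset.card_le_card (Finset.filter_subset_filter _ hS₀D)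
        have c2 : (S₀.filter fun p => p.2 = x).card ≤ (D.filter fun p => p.2 = x).card :=
          Finset.card_le_card (Finset.filter_subset_filter _ hS₀D)
        omega
      have netS₀ : ∀ x, net S₀ x = (if u = x then 1 else 0) - (if v = x then 1 else 0) := by
        intro x
        unfold net
        rw [nodup_filter_card hnd₀ (fun p => p.1 = x),
          nodup_filter_card hnd₀ (fun p => p.2 = x)]
        exact walk_count x W₀
      have hcons' : ∀ x, x ≠ u → x ≠ v → net D' x = 0 := by
        intro x hxu hxv
        rw [netD', netS₀, if_neg (Ne.symm hxu), if_neg (Ne.symm hxv)]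
        have := hcons x hxu hxv; omega
      have hnet' : net D' u = k := by
        rw [netD', netS₀, if_pos rfl, if_neg (Ne.symm huv)]
        omega
      have hl₀ne : l₀ ≠ [] := by
        cases W₀ with
        | nil => exact absurd rfl huv
        | cons h W => simp [hl₀]
      have hcard' : D'.card ≤ n := by
        have h1 : D'.card = D.card - S₀.card := by rw [hD']; exact Finset.card_sdiff_of_subset hS₀D
        have h2 : 0 < S₀.card := Finset.card_pos.mpr (by
          rw [hS₀]; exact (List.toFinset_nonempty_iff _).mpr hl₀ne)
        omega
      obtain ⟨P', hPmem, hPdisj⟩ := ih k D' hcard' (fun p hp => hadj p (hD'sub hp)) u v huv hcons' hnet'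
      refine ⟨Fin.cases W₀ P', ?_, ?_⟩
      · intro i
        induction i using Fin.cases with
        | zero => simp only [Fin.cases_zero]; exact fun p hp => hmem₀ p hp
        | succ i => simp only [Fin.cases_succ]; exact fun p hp => hD'sub (hPmem i p hp)
      · intro i j hij
        induction i using Fin.cases with
        | zero =>
          induction j using Fin.cases with
          | zero => exact absurd rfl hij
          | succ j =>
            simp only [Fin.cases_zero, Fin.cases_succ]
            intro p hp hpj
            have h1 : p ∈ D' := hPmem j p hpj
            exact (Finset.mem_sdiff.mp h1).2 (List.mem_toFinset.mpr hp)
        | succ i =>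
          induction j using Fin.cases with
          | zero =>
            simp only [Fin.cases_zero, Fin.cases_succ]
            intro p hp hpj
            have h1 : p ∈ D' := hPmem i p hp
            exact (Finset.mem_sdiff.mp h1).2 (List.mem_toFinset.mpr hpj)
          | succ j =>
            simp only [Fin.cases_succ]
            exact hPdisj i j (fun h => hij (congrArg Fin.succ h))

lemma iteswap (y x : V) : (if y = x then (1:ℤ) else 0) = (if x = y then 1 else 0) := by
  by_cases h : y = x
  · subst h; simp
  · rw [if_neg h, if_neg (fun hh => h hh.symm)]

lemma chain_imp_mem {R S : V → V → Prop} :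
    ∀ {l : List V} {a : V}, List.Chain R a l →
      (∀ x ∈ a :: l, ∀ y ∈ a :: l, R x y → S x y) → List.Chain S a l := by
  intro l
  induction l with
  | nil => intro a _ _; exact List.Chain.nil
  | cons b t ih =>
    intro a hc h
    obtain ⟨hab, hbt⟩ := List.isChain_cons_cons.mp hc
    refine List.Chain.cons (h a (by simp) b (by simp) hab) (ih hbt ?_)
    intro x hx y hy
    exact h x (by simp at hx ⊢; tauto) y (by simp at hy ⊢; tauto)

/-- dedup a chain keeping endpoints -/
lemma exists_nodup_chain {R : V → V → Prop} :
    ∀ (n : ℕ) (l : List V) (a v : V), l.length ≤ n → List.Chain R a l →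
      (a :: l).getLast? = some v →
      ∃ l', List.Chain R a l' ∧ (a :: l').getLast? = some v ∧ (a :: l').Nodup ∧
        ∀ x ∈ l', x ∈ l := by
  intro n
  induction n with
  | zero =>
    intro l a v hlen _ hlast
    have : l = [] := List.length_eq_zero_iff.mp (Nat.le_zero.mp hlen)
    subst this
    exact ⟨[], List.Chain.nil, hlast, by simp, by simp⟩
  | succ n ih =>
    intro l a v hlen hc hlast
    by_cases ha : a ∈ l
    · obtain ⟨s, t, rfl⟩ := List.append_of_mem ha
      have hct : List.Chain R a t := (List.isChain_cons_split.mp hc).2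
      have hlast' : (a :: t).getLast? = some v := by
        rw [show a :: (s ++ a :: t) = (a :: s) ++ (a :: t) by simp] at hlast
        rwa [List.getLast?_append_of_ne_nil _ (by simp)] at hlast
      have hlen' : t.length ≤ n := by
        have := hlen; simp [List.length_append] at this; omega
      obtain ⟨l', h1, h2, h3, h4⟩ := ih t a v hlen' hct hlast'
      exact ⟨l', h1, h2, h3, fun x hx => by simp [h4 x hx]⟩
    · cases l with
      | nil => exact ⟨[], List.Chain.nil, hlast, by simp, by simp⟩
      | cons b t =>
        obtain ⟨hab, hbt⟩ := List.isChain_cons_cons.mp hc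
        have hlast' : (b :: t).getLast? = some v := by
          rwa [List.getLast?_cons_cons] at hlast
        have hlen' : t.length ≤ n := by simp at hlen; omega
        obtain ⟨t', h1, h2, h3, h4⟩ := ih t b v hlen' hbt hlast'
        refine ⟨b :: t', List.Chain.cons hab h1, ?_, ?_, ?_⟩
        · rwa [List.getLast?_cons_cons]
        · refine List.nodup_cons.mpr ⟨?_, h3⟩
          simp only [List.mem_cons]
          rintro (rfl | hx)
          · exact ha (by simp)
          · exact ha (by simp [h4 _ hx])
        · intro x hx
          rcases List.mem_cons.mp hx with rfl | hx
          · simp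
          · simp [h4 _ hx]

/-- Augmenting along a residual chain. -/
lemma augment : ∀ (l : List V) (a : V) (D : Finset (V × V)),
    List.Chain (fun x y => G.Adj x y ∧ (x, y) ∉ D) a l →
    (a :: l).Nodup →
    (∀ p ∈ D, G.Adj p.1 p.2) → (∀ p ∈ D, Prod.swap p ∉ D) →
    ∀ v, (a :: l).getLast? = some v →
    ∃ D' : Finset (V × V), (∀ p ∈ D', G.Adj p.1 p.2) ∧ (∀ p ∈ D', Prod.swap p ∉ D') ∧
      ∀ x, net D' x = net D x + (if x = a then 1 else 0) - (if x = v then 1 else 0) := by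
  intro l
  induction l with
  | nil =>
    intro a D _ _ hadj hanti v hlast
    simp only [List.getLast?_singleton, Option.some.injEq] at hlast
    subst hlast
    exact ⟨D, hadj, hanti, fun x => by omega⟩
  | cons b t ih =>
    intro a D hc hnd hadj hanti v hlast
    obtain ⟨⟨hab, habD⟩, hbt⟩ := List.isChain_cons_cons.mp hc
    have hanb : a ≠ b := G.ne_of_adj hab
    have hlast' : (b :: t).getLast? = some v := by rwa [List.getLast?_cons_cons] at hlast
    -- flip the first step
    by_cases hrev : (b, a) ∈ D
    · -- erase (b,a)
      set D₂ := D.erase (b, a) with hD₂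
      have hadj₂ : ∀ p ∈ D₂, G.Adj p.1 p.2 := fun p hp => hadj p (Finset.erase_subset _ _ hp)
      have hanti₂ : ∀ p ∈ D₂, Prod.swap p ∉ D₂ := by
        intro p hp hsw
        exact hanti p (Finset.erase_subset _ _ hp) (Finset.erase_subset _ _ hsw)
      have hnet₂ : ∀ x, net D₂ x = net D x + (if x = a then 1 else 0) - (if x = b then 1 else 0) := by
        intro x
        have := net_erase hrev x
        simp only [hD₂]
        rw [this]
        dsimp only
        rw [iteswap b x, iteswap a x]
        ring
      have hc₂ : List.Chain (fun x y => G.Adj x y ∧ (x, y) ∉ D₂) b t := by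
        refine chain_imp_mem hbt ?_
        intro x _ y _ ⟨h1, h2⟩
        exact ⟨h1, fun hm => h2 (Finset.erase_subset _ _ hm)⟩
      obtain ⟨D', h1, h2, h3⟩ := ih b D₂ hc₂ (List.nodup_cons.mp hnd).2 hadj₂ hanti₂ v hlast'
      refine ⟨D', h1, h2, fun x => ?_⟩
      rw [h3 x, hnet₂ x]; omega
    · -- insert (a,b)
      set D₂ := insert (a, b) D with hD₂
      have hadj₂ : ∀ p ∈ D₂, G.Adj p.1 p.2 := by
        intro p hp
        rcases Finset.mem_insert.mp hp with rfl | hp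
        · exact hab
        · exact hadj p hp
      have hanti₂ : ∀ p ∈ D₂, Prod.swap p ∉ D₂ := by
        intro p hp hsw
        rcases Finset.mem_insert.mp hp with rfl | hp
        · rcases Finset.mem_insert.mp hsw with h | h
          · exact hanb (congrArg Prod.fst h).symm
          · exact hrev h
        · rcases Finset.mem_insert.mp hsw with h | h
          · apply hrev
            have : p = (b, a) := by
              have := congrArg Prod.swap h; simpa using this
            rwa [this] at hp
          · exact hanti p hp h
      have hnet₂ : ∀ x, net D₂ x = net D x + (if x = a then 1 else 0) - (if x = b then 1 else 0) := by
        intro x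
        have := net_insert habD x
        simp only [hD₂]
        rw [this]
        dsimp only
        rw [iteswap a x, iteswap b x]
      have hc₂ : List.Chain (fun x y => G.Adj x y ∧ (x, y) ∉ D₂) b t := by
        refine chain_imp_mem hbt ?_
        intro x hx y _ ⟨h1, h2⟩
        refine ⟨h1, fun hm => ?_⟩
        rcases Finset.mem_insert.mp hm with h | h
        · have hxa : x = a := congrArg Prod.fst h
          have : a ∉ b :: t := (List.nodup_cons.mp hnd).1
          exact this (hxa ▸ hx)
        · exact h2 h
      obtain ⟨D', h1, h2, h3⟩ := ih b D₂ hc₂ (List.nodup_cons.mp hnd).2 hadj₂ hanti₂ v hlast'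
      refine ⟨D', h1, h2, fun x => ?_⟩
      rw [h3 x, hnet₂ x]; omega

lemma sum_fst (S : Finset V) (D : Finset (V × V)) :
    ∑ x ∈ S, ((D.filter fun p => p.1 = x).card : ℤ)
      = ((D.filter fun p => p.1 ∈ S).card : ℤ) := by
  have h := Finset.card_eq_sum_card_fiberwise
    (f := Prod.fst) (s := D.filter fun p => p.1 ∈ S) (t := S)
    (fun p hp => (Finset.mem_filter.mp hp).2)
  rw [h]
  push_cast
  apply Finset.sum_congr rfl
  intro b hb
  congr 2
  ext p
  simp only [Finset.mem_filter]
  constructor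
  · rintro ⟨h1, h2⟩; exact ⟨⟨h1, h2 ▸ hb⟩, h2⟩
  · rintro ⟨⟨h1, _⟩, h3⟩; exact ⟨h1, h3⟩

lemma sum_snd (S : Finset V) (D : Finset (V × V)) :
    ∑ x ∈ S, ((D.filter fun p => p.2 = x).card : ℤ)
      = ((D.filter fun p => p.2 ∈ S).card : ℤ) := by
  have h := Finset.card_eq_sum_card_fiberwise
    (f := Prod.snd) (s := D.filter fun p => p.2 ∈ S) (t := S)
    (fun p hp => (Finset.mem_filter.mp hp).2)
  rw [h]
  push_cast
  apply Finset.sum_congr rfl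
  intro b hb
  congr 2
  ext p
  simp only [Finset.mem_filter]
  constructor
  · rintro ⟨h1, h2⟩; exact ⟨⟨h1, h2 ▸ hb⟩, h2⟩
  · rintro ⟨⟨h1, _⟩, h3⟩; exact ⟨h1, h3⟩

lemma exists_residual [Fintype V] {D : Finset (V × V)} {u v : V} {k : ℕ}
    (hadj : ∀ p ∈ D, G.Adj p.1 p.2) (hanti : ∀ p ∈ D, Prod.swap p ∉ D)
    (hcons : ∀ x, x ≠ u → x ≠ v → net D x = 0) (hnet : net D u = k) (huv : u ≠ v)
    (hcut : ∀ F : Finset (Sym2 V), ↑F ⊆ G.edgeSet → F.card < k + 1 →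
      (G.deleteEdges (↑F : Set (Sym2 V))).Connected) :
    Relation.ReflTransGen (fun x y => G.Adj x y ∧ (x, y) ∉ D) u v := by
  classical
  by_contra hv
  set R : V → V → Prop := fun x y => G.Adj x y ∧ (x, y) ∉ D with hR
  set Rset : Finset V := Finset.univ.filter (fun x => Relation.ReflTransGen R u x) with hRset
  have hu : u ∈ Rset := by
    simp only [hRset, Finset.mem_filter, Finset.mem_univ, true_and]
    exact Relation.ReflTransGen.refl
  have hvn : v ∉ Rset := by
    simp only [hRset, Finset.mem_filter, Finset.mem_univ, true_and]
    exact hv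
  have hcross : ∀ x ∈ Rset, ∀ y, G.Adj x y → y ∉ Rset → (x, y) ∈ D := by
    intro x hx y hxy hy
    by_contra hd
    apply hy
    simp only [hRset, Finset.mem_filter, Finset.mem_univ, true_and] at hx ⊢
    exact hx.tail ⟨hxy, hd⟩
  set A : Finset (V × V) := D.filter (fun p => p.1 ∈ Rset ∧ p.2 ∈ Rset) with hA
  set C : Finset (V × V) := D.filter (fun p => p.1 ∈ Rset ∧ p.2 ∉ Rset) with hC
  set B : Finset (V × V) := D.filter (fun p => p.1 ∉ Rset ∧ p.2 ∈ Rset) with hB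
  have hsum : ∑ x ∈ Rset, net D x = (k : ℤ) := by
    rw [Finset.sum_eq_single_of_mem u hu]
    · exact hnet
    · intro x hx hne
      exact hcons x hne (fun h => hvn (h ▸ hx))
  have e1 : (D.filter fun p => p.1 ∈ Rset).card = A.card + C.card := by
    rw [show (D.filter fun p => p.1 ∈ Rset) = A ∪ C from by
      ext p
      simp only [hA, hC, Finset.mem_filter, Finset.mem_union]
      tauto]
    apply Finset.card_union_of_disjoint
    rw [Finset.disjoint_left]
    intro p hp hp'
    rw [hA, Finset.mem_filter] at hp
    rw [hC, Finset.mem_filter] at hp'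
    tauto
  have hBempty : B = ∅ := by
    rw [Finset.eq_empty_iff_forall_notMem]
    rintro ⟨y, x⟩ hp
    rw [hB, Finset.mem_filter] at hp
    obtain ⟨hpD, hyR, hxR⟩ := hp
    have hadj' : G.Adj x y := (hadj _ hpD).symm
    have : (x, y) ∈ D := hcross x hxR y hadj' hyR
    exact hanti _ this (by simpa using hpD)
  have e2 : (D.filter fun p => p.2 ∈ Rset).card = A.card := by
    rw [show (D.filter fun p => p.2 ∈ Rset) = A ∪ B from by
      ext p
      simp only [hA, hB, Finset.mem_filter, Finset.mem_union]
      tauto]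
    rw [hBempty, Finset.union_empty]
  have hCcard : C.card = k := by
    have hnet_eq : ∑ x ∈ Rset, net D x
        = ((D.filter fun p => p.1 ∈ Rset).card : ℤ)
          - ((D.filter fun p => p.2 ∈ Rset).card : ℤ) := by
      unfold net
      rw [Finset.sum_sub_distrib, sum_fst, sum_snd]
    rw [hnet_eq] at hsum
    omega
  -- build the cut and contradict
  set F : Finset (Sym2 V) := C.image (fun p => Sym2.mk p.1 p.2) with hF
  have hFsub : (↑F : Set (Sym2 V)) ⊆ G.edgeSet := by
    intro e he
    simp only [hF, Finset.coe_image, Set.mem_image, Finset.mem_coe] at he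
    obtain ⟨p, hp, rfl⟩ := he
    have : p ∈ D := Finset.mem_of_mem_filter _ hp
    exact hadj _ this
  have hFcard : F.card < k + 1 := by
    have h1 := Finset.card_image_le (s := C) (f := fun p => Sym2.mk p.1 p.2)
    rw [← hF] at h1
    omega
  have hconn := hcut F hFsub hFcard
  obtain ⟨W⟩ := hconn.preconnected u v
  have key : ∀ (x y : V) (W : (G.deleteEdges (↑F : Set (Sym2 V))).Walk x y),
      x ∈ Rset → y ∈ Rset := by
    intro x y W
    induction W with
    | nil => exact id
    | @cons x y _ h p ih =>
      intro hx
      apply ih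
      rw [SimpleGraph.deleteEdges_adj] at h
      obtain ⟨hadj', hmem⟩ := h
      by_contra hy
      apply hmem
      have hD : (x, y) ∈ D := hcross x hx y hadj' hy
      have hC' : (x, y) ∈ C := by
        rw [hC, Finset.mem_filter]; exact ⟨hD, hx, hy⟩
      simp only [hF, Finset.coe_image, Set.mem_image, Finset.mem_coe]
      exact ⟨(x, y), hC', rfl⟩
  exact hvn (key u v W hu)


lemma exists_flow [Fintype V] : ∀ (k : ℕ),
    (∀ F : Finset (Sym2 V), ↑F ⊆ G.edgeSet → F.card < k →
      (G.deleteEdges (↑F : Set (Sym2 V))).Connected) →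
    ∀ u v : V, u ≠ v →
    ∃ D : Finset (V × V), (∀ p ∈ D, G.Adj p.1 p.2) ∧ (∀ p ∈ D, Prod.swap p ∉ D) ∧
      (∀ x, x ≠ u → x ≠ v → net D x = 0) ∧ net D u = k := by
  intro k
  induction k with
  | zero =>
    intro _ u v _
    exact ⟨∅, by simp, by simp, fun x _ _ => by simp [net], by simp [net]⟩
  | succ k ih =>
    intro hcut u v huv
    obtain ⟨D, h1, h2, h3, h4⟩ := ih (fun F hF hc => hcut F hF (by omega)) u v huv
    have hreach := exists_residual h1 h2 h3 h4 huv hcut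
    obtain ⟨l, hchain, hlast⟩ := List.exists_isChain_cons_of_relationReflTransGen hreach
    have hlast? : (u :: l).getLast? = some v := by
      rw [List.getLast?_eq_getLast_of_ne_nil (List.cons_ne_nil _ _), hlast]
    obtain ⟨l', hc', hlast', hnd', -⟩ :=
      exists_nodup_chain l.length l u v le_rfl hchain hlast?
    obtain ⟨D', g1, g2, g3⟩ := augment l' u D hc' hnd' h1 h2 v hlast'
    refine ⟨D', g1, g2, ?_, ?_⟩
    · intro x hxu hxv
      rw [g3, h3 x hxu hxv, if_neg hxu, if_neg hxv]
      ring
    · rw [g3, if_pos rfl, if_neg huv, h4]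
      push_cast
      ring

end EdgeMenger

/-- **edge version of Menger's theorem.** A finite simple graph `G` on at
least two vertices has at least `k` pairwise edge-disjoint paths between every two
distinct vertices if and only if `G` is `k`-edge-connected. -/
theorem edge_disjoint_paths_iff_k_edge_connected
    {V : Type*} [Fintype V] [Nontrivial V] (G : SimpleGraph V) (k : ℕ) :
    (∀ u v : V, u ≠ v → ∃ P : Fin k → G.Walk u v,
        (∀ i, (P i).IsPath) ∧
        (∀ i j, i ≠ j → ∀ e : Sym2 V, e ∈ (P i).edges → e ∉ (P j).edges)) ↔
      (∀ F : Finset (Sym2 V), ↑F ⊆ G.edgeSet → F.card < k →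
        (G.deleteEdges (↑F : Set (Sym2 V))).Connected) := by
  classical
  constructor
  · -- easy direction
    intro hpaths F hFsub hFcard
    rw [SimpleGraph.connected_iff]
    refine ⟨?_, inferInstance⟩
    intro a b
    by_cases hab : a = b
    · subst hab; exact SimpleGraph.Reachable.refl a
    · obtain ⟨P, hpath, hdisj⟩ := hpaths a b hab
      have hex : ∃ i, ∀ e ∈ (P i).edges, e ∉ F := by
        by_contra h
        push_neg at h
        choose f hf1 hf2 using h
        have hinj : Function.Injective f := by
          intro i j hij
          by_contra hne
          exact hdisj i j hne (f i) (hf1 i) (hij ▸ hf1 j)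
        have hcard := Fintype.card_le_of_injective
          (fun i => (⟨f i, hf2 i⟩ : {e // e ∈ F}))
          (fun i j h => hinj (congrArg Subtype.val h))
        simp only [Fintype.card_coe, Fintype.card_fin] at hcard
        omega
      obtain ⟨i, hi⟩ := hex
      refine ⟨(P i).transfer (G.deleteEdges (↑F : Set (Sym2 V))) ?_⟩
      intro e he
      rw [SimpleGraph.edgeSet_deleteEdges]
      exact ⟨(P i).edges_subset_edgeSet he, fun hc => hi e he hc⟩
  · -- hard direction: Menger
    intro hcut u v huv
    obtain ⟨D, hadj, hanti, hcons, hnet⟩ := EdgeMenger.exists_flow k hcut u v huv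
    obtain ⟨P, hmem, hdisj⟩ :=
      EdgeMenger.decompose D.card k D le_rfl hadj u v huv hcons hnet
    refine ⟨fun i => (P i).bypass, fun i => (P i).bypass_isPath, ?_⟩
    intro i j hij e hei hej
    have hei' := (P i).edges_bypass_subset hei
    have hej' := (P j).edges_bypass_subset hej
    unfold SimpleGraph.Walk.edges at hei' hej'
    obtain ⟨d, hd, hde⟩ := List.mem_map.mp hei'
    obtain ⟨d', hd', hde'⟩ := List.mem_map.mp hej'
    have hpmem : d.toProd ∈ (P i).darts.map SimpleGraph.Dart.toProd :=
      List.mem_map.mpr ⟨d, hd, rfl⟩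
    have hqmem : d'.toProd ∈ (P j).darts.map SimpleGraph.Dart.toProd :=
      List.mem_map.mpr ⟨d', hd', rfl⟩
    have heq : Sym2.mk d.toProd.1 d.toProd.2 = Sym2.mk d'.toProd.1 d'.toProd.2 := by
      rw [show Sym2.mk d.toProd.1 d.toProd.2 = d.edge from rfl, show Sym2.mk d'.toProd.1 d'.toProd.2 = d'.edge from rfl,
        hde, hde']
    rcases Sym2.mk_eq_mk_iff.mp heq with h | h
    · exact hdisj i j hij d.toProd hpmem (h ▸ hqmem)
    · exact hanti d'.toProd (hmem j _ hqmem) (h ▸ hmem i _ hpmem)
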